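/- Let $(\theta_k)_{k \geq 1}$ be a sequence with $\theta_k \in (0,1]$ and suppose there exist constants $c > 0$ and a function $g(k) = \log(2kC+1)$ (for a fixed positive integer $C$) such that for all $k, l \geq 1$: $\theta_{k+l} \leq (2lC+1)\,\theta_l\,\theta_k$ and $\theta_{k+l} \geq \frac{1}{2lC+1}\,\theta_l\,\theta_k$. Then the limit $\phi = \lim_{k \to \infty} -\frac{\log \theta_k}{k}$ exists and is finite, and there exist positive constants $\sigma_1, \sigma_2$ such that $\sigma_1 k^{-1} e^{-k\phi} \leq \theta_k \leq \sigma_2 k\, e^{-k\phi}$ for all $k \geq 1$. -/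
import Mathlib

open Real Filter

/-- Key numeric inequality: for `1 ≤ k ≤ l` and `1 ≤ C` (reals),
`(2kC+1)(k+l) ≤ k * l * (6C)`. -/
lemma stmt4_key {C k l : ℝ} (hC : 1 ≤ C) (hk : 1 ≤ k) (hkl : k ≤ l) :
    (2 * k * C + 1) * (k + l) ≤ k * l * (6 * C) := by
  have hl : 1 ≤ l := hk.trans hkl
  have hk0 : (0:ℝ) ≤ k := by linarith
  have hl0 : (0:ℝ) ≤ l := by linarith
  have hC0 : (0:ℝ) ≤ C := by linarith
  have h1 : (2*C*k)*k ≤ (2*C*k)*l :=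
    mul_le_mul_of_nonneg_left hkl
      (mul_nonneg (mul_nonneg (by norm_num) hC0) hk0)
  have hkC : (1:ℝ)*1 ≤ k*C := mul_le_mul hk hC zero_le_one hk0
  have h3 : (2*l)*1 ≤ (2*l)*(k*C) :=
    mul_le_mul_of_nonneg_left (by linarith) (by linarith)
  nlinarith [h1, h3, hkl]

/-- Log version, with the smaller of `k, l` in the factor. -/
lemma stmt4_keylog {C k l : ℝ} (hC : 1 ≤ C) (hk : 1 ≤ k) (hkl : k ≤ l) :
    Real.log (2 * k * C + 1) + Real.log (k + l)
      ≤ Real.log k + Real.log l + Real.log (6 * C) := by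
  have hl : 1 ≤ l := hk.trans hkl
  rw [← Real.log_mul (by positivity) (by positivity),
    ← Real.log_mul (by positivity) (by positivity),
    ← Real.log_mul (by positivity) (by positivity)]
  exact Real.log_le_log (by positivity) (stmt4_key hC hk hkl)

/-- If `θ_k ∈ (0,1]` satisfies the approximate sub- and super-multiplicativity
`θ_{k+l} ≤ (2lC+1) θ_l θ_k` and `θ_{k+l} ≥ θ_l θ_k / (2lC+1)` for all `k, l ≥ 1`,
then `φ = lim -log θ_k / k` exists and is finite, and there are `σ₁, σ₂ > 0` with
`σ₁ k⁻¹ e^{-kφ} ≤ θ_k ≤ σ₂ k e^{-kφ}` for all `k ≥ 1`. -/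
theorem stmt_4 (C : ℕ) (hC : 0 < C) (θ : ℕ → ℝ)
    (hθ : ∀ k, 1 ≤ k → θ k ∈ Set.Ioc (0 : ℝ) 1)
    (hupper : ∀ k l, 1 ≤ k → 1 ≤ l →
      θ (k + l) ≤ (2 * l * C + 1 : ℝ) * θ l * θ k)
    (hlower : ∀ k l, 1 ≤ k → 1 ≤ l →
      θ (k + l) ≥ (1 / (2 * l * C + 1 : ℝ)) * θ l * θ k) :
    ∃ φ : ℝ, Filter.Tendsto (fun k : ℕ => -(Real.log (θ k)) / k) Filter.atTop (nhds φ) ∧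
      ∃ σ₁ > (0 : ℝ), ∃ σ₂ > (0 : ℝ), ∀ k : ℕ, 1 ≤ k →
        σ₁ * (k : ℝ)⁻¹ * Real.exp (-(k : ℝ) * φ) ≤ θ k ∧
        θ k ≤ σ₂ * (k : ℝ) * Real.exp (-(k : ℝ) * φ) := by
  have hC1 : (1 : ℝ) ≤ C := by exact_mod_cast hC
  have h6C : (0 : ℝ) < 6 * C := by positivity
  have hlog6C : 0 ≤ Real.log (6 * C) := Real.log_nonneg (by linarith)
  have hθpos : ∀ k : ℕ, 1 ≤ k → 0 < θ k := fun k hk => (hθ k hk).1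
  have hθle : ∀ k : ℕ, 1 ≤ k → θ k ≤ 1 := fun k hk => (hθ k hk).2
  -- the subadditive sequence b and the (negation of the) superadditive sequence u
  set b : ℕ → ℝ := fun k =>
    if k = 0 then 0 else -Real.log (θ k) + Real.log k + Real.log (6 * C) with hb_def
  set u : ℕ → ℝ := fun k =>
    if k = 0 then 0 else Real.log (θ k) + Real.log k + Real.log (6 * C) with hu_def
  have hb_eq : ∀ k : ℕ, 1 ≤ k →
      b k = -Real.log (θ k) + Real.log k + Real.log (6 * C) := by
    intro k hk; simp [hb_def, Nat.one_le_iff_ne_zero.mp hk]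
  have hu_eq : ∀ k : ℕ, 1 ≤ k →
      u k = Real.log (θ k) + Real.log k + Real.log (6 * C) := by
    intro k hk; simp [hu_def, Nat.one_le_iff_ne_zero.mp hk]
  have hbnonneg : ∀ k : ℕ, 0 ≤ b k := by
    intro k
    rcases Nat.eq_zero_or_pos k with h | h
    · simp [hb_def, h]
    · rw [hb_eq k h]
      have h1 : Real.log (θ k) ≤ 0 := Real.log_nonpos (le_of_lt (hθpos k h)) (hθle k h)
      have h2 : 0 ≤ Real.log k := Real.log_nonneg (by exact_mod_cast h)
      linarith
  -- the key log estimates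
  have hupperlog : ∀ k l : ℕ, 1 ≤ k → 1 ≤ l → k ≤ l →
      -Real.log (θ (k + l)) ≥
        -Real.log (θ k) - Real.log (θ l) - Real.log (2 * k * C + 1) := by
    intro k l hk hl hkl
    have h := hupper l k hl hk
    rw [add_comm l k] at h
    have hfac : (0 : ℝ) < 2 * k * C + 1 := by positivity
    have := Real.log_le_log (hθpos _ (by omega)) h
    rw [Real.log_mul (mul_ne_zero hfac.ne' (hθpos k hk).ne') (hθpos l hl).ne',
      Real.log_mul hfac.ne' (hθpos k hk).ne'] at this
    linarith
  have hlowerlog : ∀ k l : ℕ, 1 ≤ k → 1 ≤ l → k ≤ l →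
      -Real.log (θ (k + l)) ≤
        -Real.log (θ k) - Real.log (θ l) + Real.log (2 * k * C + 1) := by
    intro k l hk hl hkl
    have h := hlower l k hl hk
    rw [add_comm l k] at h
    have hfac : (0 : ℝ) < 2 * k * C + 1 := by positivity
    have hinv : (0:ℝ) < 1 / (2 * (k:ℝ) * C + 1) := by positivity
    have := Real.log_le_log (mul_pos (mul_pos hinv (hθpos k hk)) (hθpos l hl)) h
    rw [Real.log_mul (mul_ne_zero hinv.ne' (hθpos k hk).ne') (hθpos l hl).ne',
      Real.log_mul hinv.ne' (hθpos k hk).ne',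
      Real.log_div one_ne_zero hfac.ne', Real.log_one] at this
    linarith
  -- cast version of keylog
  have hkeylog : ∀ k l : ℕ, 1 ≤ k → 1 ≤ l → k ≤ l →
      Real.log (2 * (k:ℝ) * C + 1) + Real.log ((k:ℝ) + l)
        ≤ Real.log k + Real.log l + Real.log (6 * C) := by
    intro k l hk hl hkl
    exact stmt4_keylog hC1 (by exact_mod_cast hk) (by exact_mod_cast hkl)
  -- subadditivity of b
  have hb_core : ∀ k l : ℕ, 1 ≤ k → 1 ≤ l → k ≤ l → b (k + l) ≤ b k + b l := by
    intro k l hk hl hkl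
    rw [hb_eq _ (by omega), hb_eq _ hk, hb_eq _ hl]
    have h1 := hlowerlog k l hk hl hkl
    have h2 := hkeylog k l hk hl hkl
    have : ((k + l : ℕ) : ℝ) = (k:ℝ) + l := by push_cast; ring
    rw [this]
    linarith
  have hb_sub : Subadditive b := by
    intro m n
    rcases Nat.eq_zero_or_pos m with hm | hm
    · simp [hb_def, hm]
    rcases Nat.eq_zero_or_pos n with hn | hn
    · simp [hb_def, hn]
    rcases le_total m n with h | h
    · exact hb_core m n hm hn h
    · have := hb_core n m hn hm h; rw [add_comm] at this; linarith
  have hu_core : ∀ k l : ℕ, 1 ≤ k → 1 ≤ l → k ≤ l → u (k + l) ≤ u k + u l := by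
    intro k l hk hl hkl
    rw [hu_eq _ (by omega), hu_eq _ hk, hu_eq _ hl]
    have h1 := hupperlog k l hk hl hkl
    have h2 := hkeylog k l hk hl hkl
    have : ((k + l : ℕ) : ℝ) = (k:ℝ) + l := by push_cast; ring
    rw [this]
    linarith
  have hu_sub : Subadditive u := by
    intro m n
    rcases Nat.eq_zero_or_pos m with hm | hm
    · simp [hu_def, hm]
    rcases Nat.eq_zero_or_pos n with hn | hn
    · simp [hu_def, hn]
    rcases le_total m n with h | h
    · exact hu_core m n hm hn h
    · have := hu_core n m hn hm h; rw [add_comm] at this; linarith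
  -- boundedness below
  have hb_bdd : BddBelow (Set.range fun n : ℕ => b n / n) := by
    refine ⟨0, ?_⟩
    rintro x ⟨n, rfl⟩
    exact div_nonneg (hbnonneg n) (Nat.cast_nonneg n)
  have hb_lin : ∀ n : ℕ, b n ≤ n * b 1 := by
    intro n
    have h0 : b 0 = 0 := by simp [hb_def]
    have := hb_sub.apply_mul_add_le n 1 0
    simpa [h0] using this
  have hub : ∀ n : ℕ, 1 ≤ n → u n ≥ -b n := by
    intro n hn
    rw [hu_eq n hn, hb_eq n hn]
    have h2 : 0 ≤ Real.log n := Real.log_nonneg (by exact_mod_cast hn)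
    linarith
  have hu_bdd : BddBelow (Set.range fun n : ℕ => u n / n) := by
    refine ⟨-(b 1), ?_⟩
    rintro x ⟨n, rfl⟩
    rcases Nat.eq_zero_or_pos n with hn | hn
    · simp only [hu_def, hn]
      norm_num
      linarith [hbnonneg 1]
    · have hnp : (0:ℝ) < n := by exact_mod_cast hn
      rw [le_div_iff₀ hnp]
      linarith [hub n hn, hb_lin n]
  -- the limits
  set φ := hb_sub.lim with hφ_def
  have hb_tendsto := hb_sub.tendsto_lim hb_bdd
  have hu_tendsto := hu_sub.tendsto_lim hu_bdd
  -- log n / n → 0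
  have hlogn : Tendsto (fun n : ℕ => Real.log n / n) atTop (nhds 0) :=
    (Real.isLittleO_log_id_atTop.tendsto_div_nhds_zero).comp tendsto_natCast_atTop_atTop
  have hconst : Tendsto (fun n : ℕ => Real.log (6 * C) / n) atTop (nhds 0) :=
    tendsto_const_div_atTop_nhds_zero_nat _
  -- main tendsto
  have hmain : Tendsto (fun k : ℕ => -(Real.log (θ k)) / k) atTop (nhds φ) := by
    have h := (hb_tendsto.sub hlogn).sub hconst
    rw [sub_zero, sub_zero] at h
    refine h.congr' ?_
    filter_upwards [eventually_ge_atTop 1] with n hn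
    rw [hb_eq n hn]
    field_simp
    try ring
  refine ⟨φ, hmain, ?_⟩
  -- identify the limit of u n / n as -φ
  have humain : Tendsto (fun n : ℕ => u n / n) atTop (nhds (-φ)) := by
    have h := ((hmain.neg.add hlogn).add hconst)
    rw [show -φ + 0 + 0 = -φ by ring] at h
    refine h.congr' ?_
    filter_upwards [eventually_ge_atTop 1] with n hn
    rw [hu_eq n hn]
    field_simp
    try ring
  have hulim : hu_sub.lim = -φ := tendsto_nhds_unique hu_tendsto humain
  refine ⟨(6 * C : ℝ)⁻¹, by positivity, 6 * C, h6C, ?_⟩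
  intro k hk
  have hknz : k ≠ 0 := by omega
  have hkp : (0:ℝ) < k := by exact_mod_cast Nat.pos_of_ne_zero hknz
  have h1 : φ ≤ b k / k := hb_sub.lim_le_div hb_bdd hknz
  have h2 : -φ ≤ u k / k := by rw [← hulim]; exact hu_sub.lim_le_div hu_bdd hknz
  rw [le_div_iff₀ hkp] at h1 h2
  rw [hb_eq k hk] at h1
  rw [hu_eq k hk] at h2
  constructor
  · -- lower bound
    have hlog : -(k:ℝ) * φ - Real.log k - Real.log (6 * C) ≤ Real.log (θ k) := by
      nlinarith [h2]
    calc (6 * (C:ℝ))⁻¹ * (k : ℝ)⁻¹ * Real.exp (-(k : ℝ) * φ)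
        = Real.exp (-(k:ℝ) * φ - Real.log k - Real.log (6 * C)) := by
          rw [Real.exp_sub, Real.exp_sub, Real.exp_log hkp, Real.exp_log h6C]
          ring
      _ ≤ Real.exp (Real.log (θ k)) := Real.exp_le_exp.mpr hlog
      _ = θ k := Real.exp_log (hθpos k hk)
  · -- upper bound
    have hlog : Real.log (θ k) ≤ -(k:ℝ) * φ + Real.log k + Real.log (6 * C) := by
      nlinarith
    calc θ k = Real.exp (Real.log (θ k)) := (Real.exp_log (hθpos k hk)).symm
      _ ≤ Real.exp (-(k:ℝ) * φ + Real.log k + Real.log (6 * C)) :=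
          Real.exp_le_exp.mpr hlog
      _ = 6 * (C:ℝ) * (k : ℝ) * Real.exp (-(k : ℝ) * φ) := by
          rw [Real.exp_add, Real.exp_add, Real.exp_log hkp, Real.exp_log h6C]
          ring
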